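/- Let n be a positive integer and let p and q be divisors of n with gcd(p,q) = 1 and p < q < 2p. Then setting a = 2pn/q and b = qn/p, the quadruple (a,b,n,n) satisfies a*b = 2*n^2, a > n, and b > n; in particular (a,b,n,n) is a donut (after ordering the exterior sides so the larger comes first). -/

import Mathlib

/-- A donut `(a,b,x,y)`: exterior `a × b` with `1 < b ≤ a`, hole `x × y` strictly inside,
and the exterior area is twice the hole area. -/
def IsDonut (a b x y : ℕ) : Prop :=
  1 < b ∧ b ≤ a ∧ a * b = 2 * (x * y) ∧ 1 ≤ x ∧ x < a ∧ 1 ≤ y ∧ y < b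

/-- Given coprime divisors `p < q < 2p` of `n`, the quadruple
`(2pn/q, qn/p, n, n)` has the donut area and size properties, and after ordering the
exterior sides it is a donut. -/
theorem squareHoled_donut_construction (n p q : ℕ) (hn : 0 < n)
    (hp : p ∣ n) (hq : q ∣ n) (hpq : Nat.gcd p q = 1) (h1 : p < q) (h2 : q < 2 * p) :
    (2 * p * n / q) * (q * n / p) = 2 * n ^ 2 ∧
    n < 2 * p * n / q ∧ n < q * n / p ∧
    IsDonut (max (2 * p * n / q) (q * n / p)) (min (2 * p * n / q) (q * n / p)) n n := by
  have hp0 : 0 < p := by omega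
  have hq0 : 0 < q := by omega
  have hqd : q ∣ 2 * p * n := Dvd.dvd.mul_left hq (2 * p)
  have hpd : p ∣ q * n := Dvd.dvd.mul_left hp q
  have hprod : (2 * p * n / q) * (q * n / p) = 2 * n ^ 2 := by
    rw [Nat.div_mul_div_comm hqd hpd]
    have : 2 * p * n * (q * n) = 2 * n ^ 2 * (q * p) := by ring
    rw [this, Nat.mul_div_cancel _ (Nat.mul_pos hq0 hp0)]
  have ha : n < 2 * p * n / q := by
    rw [Nat.lt_div_iff_mul_lt' hqd]
    nlinarith
  have hb : n < q * n / p := by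
    rw [Nat.lt_div_iff_mul_lt' hpd]
    nlinarith
  refine ⟨hprod, ha, hb, ?_, ?_, ?_, hn, ?_, hn, ?_⟩
  · have := lt_min ha hb; omega
  · exact min_le_max
  · rcases le_total (2 * p * n / q) (q * n / p) with h | h
    · rw [max_eq_right h, min_eq_left h, mul_comm, hprod]; ring
    · rw [max_eq_left h, min_eq_right h]; rw [hprod]; ring
  · exact lt_of_lt_of_le (lt_min ha hb) (min_le_max)
  · exact lt_min ha hb
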